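/- arXiv:0909.4101 — 2 statements merged into one kernel-verified Lean document; each statement's English description precedes it below -/
import Mathlib

section
/- For every nonzero polynomial system f ∈ H_d, the condition number κ̃(f) equals ‖f‖_W / dist(f, Σ_ℝ), where dist(f, Σ_ℝ) is the distance in the Bombieri–Weyl norm from f to the set Σ_ℝ of ill-posed systems. -/
open MvPolynomial Finset ENNReal

/-- Bombieri–Weyl inner product of two polynomials (intended for homogeneous
polynomials of the same degree `d`): `⟨Σ aⱼ xʲ, Σ bⱼ xʲ⟩_W = Σ aⱼ bⱼ / binom(d, j)`
where `binom(d, j) = d! / (j₀! ⋯ jₙ!)`. -/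
noncomputable def bwInner {m : ℕ} (p q : MvPolynomial (Fin m) ℝ) : ℝ :=
  ∑ j ∈ p.support ∪ q.support,
    (p.coeff j * q.coeff j) / (Nat.multinomial Finset.univ j : ℝ)

/-- Bombieri–Weyl norm of one polynomial. -/
noncomputable def bwNorm {m : ℕ} (p : MvPolynomial (Fin m) ℝ) : ℝ :=
  Real.sqrt (bwInner p p)

/-- Bombieri–Weyl norm `‖f‖_W` of a system `f = (f_1, …, f_n)`. -/
noncomputable def bwNormSys {n : ℕ} (f : Fin n → MvPolynomial (Fin (n + 1)) ℝ) : ℝ :=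
  Real.sqrt (∑ i, bwInner (f i) (f i))

/-- Distance (w.r.t. the Bombieri–Weyl norm) from a system `f` to a set `S` of systems. -/
noncomputable def bwDist {n : ℕ} (f : Fin n → MvPolynomial (Fin (n + 1)) ℝ)
    (S : Set (Fin n → MvPolynomial (Fin (n + 1)) ℝ)) : ℝ :=
  sInf ((fun g => bwNormSys (f - g)) '' S)

/-- The unit sphere `Sⁿ ⊆ ℝ^{n+1}`. -/
def unitSphere (n : ℕ) : Set (Fin (n + 1) → ℝ) := {x | ∑ k, x k ^ 2 = 1}

/-- `f` belongs to `H_d`: each component is homogeneous of degree `d i`. -/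
def IsSystem {n : ℕ} (d : Fin n → ℕ) (f : Fin n → MvPolynomial (Fin (n + 1)) ℝ) : Prop :=
  ∀ i, (f i).IsHomogeneous (d i)

/-- The derivative `Df(x)` restricted to the tangent space `T_x Sⁿ = x^⊥` is singular,
i.e. it kills some nonzero tangent vector `v`. -/
def SingularAt {n : ℕ} (f : Fin n → MvPolynomial (Fin (n + 1)) ℝ)
    (x : Fin (n + 1) → ℝ) : Prop :=
  ∃ v : Fin (n + 1) → ℝ, v ≠ 0 ∧ (∑ k, v k * x k = 0) ∧
    ∀ i, ∑ k, MvPolynomial.eval x (MvPolynomial.pderiv k (f i)) * v k = 0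

/-- `Σ_ℝ(x)`: the systems in `H_d` having `x` as a multiple zero. -/
def SigmaRx {n : ℕ} (d : Fin n → ℕ) (x : Fin (n + 1) → ℝ) :
    Set (Fin n → MvPolynomial (Fin (n + 1)) ℝ) :=
  {g | IsSystem d g ∧ (∀ i, MvPolynomial.eval x (g i) = 0) ∧ SingularAt g x}

/-- `Σ_ℝ = ⋃_{x ∈ Sⁿ} Σ_ℝ(x)`: the systems in `H_d` with a multiple zero on `Sⁿ`. -/
def SigmaR {n : ℕ} (d : Fin n → ℕ) : Set (Fin n → MvPolynomial (Fin (n + 1)) ℝ) :=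
  ⋃ x ∈ unitSphere n, SigmaRx d x

/-- The smallest singular value of `diag(1/√dᵢ) · Df(x)|_{T_x Sⁿ}`, i.e.
`inf {‖diag(1/√dᵢ)·Df(x) v‖₂ : v ⊥ x, ‖v‖₂ = 1}`.  This equals
`‖f‖_W · μ̃_norm(f,x)⁻¹`, where `μ̃_norm(f,x) = ‖f‖_W ‖(Df(x)|_{T_x Sⁿ})⁻¹ diag(√dᵢ)‖`
(spectral norm, `+∞` when `Df(x)|_{T_x Sⁿ}` is singular); it is `0` exactly
when `μ̃_norm(f,x) = +∞`. -/
noncomputable def sigmaMin {n : ℕ} (d : Fin n → ℕ)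
    (f : Fin n → MvPolynomial (Fin (n + 1)) ℝ) (x : Fin (n + 1) → ℝ) : ℝ :=
  sInf ((fun v => Real.sqrt (∑ i,
      ((∑ k, MvPolynomial.eval x (MvPolynomial.pderiv k (f i)) * v k) / Real.sqrt (d i)) ^ 2)) ''
    {v : Fin (n + 1) → ℝ | (∑ k, v k * x k = 0) ∧ ∑ k, v k ^ 2 = 1})

/-- `κ̃(f, x) = ‖f‖_W / (‖f‖_W² μ̃_norm(f,x)⁻² + ‖f(x)‖₂²)^{1/2}` as an extended
nonnegative real (value `+∞` when `f` has `x` as multiple zero), using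
`‖f‖_W² μ̃_norm(f,x)⁻² = (sigmaMin d f x)²`. -/
noncomputable def kappaAt {n : ℕ} (d : Fin n → ℕ)
    (f : Fin n → MvPolynomial (Fin (n + 1)) ℝ) (x : Fin (n + 1) → ℝ) : ℝ≥0∞ :=
  ENNReal.ofReal (bwNormSys f) /
    ENNReal.ofReal (Real.sqrt (sigmaMin d f x ^ 2 + ∑ i, (MvPolynomial.eval x (f i)) ^ 2))

/-- `κ̃(f) = max_{x ∈ Sⁿ} κ̃(f, x)`. -/
noncomputable def kappa {n : ℕ} (d : Fin n → ℕ)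
    (f : Fin n → MvPolynomial (Fin (n + 1)) ℝ) : ℝ≥0∞ :=
  ⨆ x ∈ unitSphere n, kappaAt d f x

namespace BW

variable {m : ℕ}

lemma bwInner_eq_sum {p q : MvPolynomial (Fin m) ℝ} {u : Finset (Fin m →₀ ℕ)}
    (hp : p.support ⊆ u) (hq : q.support ⊆ u) :
    bwInner p q = ∑ j ∈ u, (p.coeff j * q.coeff j) / (Nat.multinomial Finset.univ j : ℝ) := by
  refine Finset.sum_subset (Finset.union_subset hp hq) ?_
  intro j _ hj
  rw [Finset.mem_union, not_or] at hj
  rw [MvPolynomial.notMem_support_iff.mp hj.1, zero_mul, zero_div]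

lemma bwInner_comm (p q : MvPolynomial (Fin m) ℝ) : bwInner p q = bwInner q p := by
  rw [bwInner, bwInner, Finset.union_comm]
  exact Finset.sum_congr rfl fun j _ => by rw [mul_comm]

lemma bwInner_add_left (p q r : MvPolynomial (Fin m) ℝ) :
    bwInner (p + q) r = bwInner p r + bwInner q r := by
  rw [bwInner_eq_sum (u := p.support ∪ q.support ∪ r.support)
      ((MvPolynomial.support_add).trans Finset.subset_union_left)
      (Finset.subset_union_right),
    bwInner_eq_sum (u := p.support ∪ q.support ∪ r.support)
      ((Finset.subset_union_left).trans Finset.subset_union_left) Finset.subset_union_right,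
    bwInner_eq_sum (u := p.support ∪ q.support ∪ r.support)
      ((Finset.subset_union_right).trans Finset.subset_union_left) Finset.subset_union_right,
    ← Finset.sum_add_distrib]
  refine Finset.sum_congr rfl fun j _ => ?_
  rw [MvPolynomial.coeff_add, add_mul, add_div]

lemma bwInner_smul_left (c : ℝ) (p r : MvPolynomial (Fin m) ℝ) :
    bwInner (c • p) r = c * bwInner p r := by
  rw [bwInner_eq_sum (u := p.support ∪ r.support)
      ((MvPolynomial.support_smul).trans Finset.subset_union_left) Finset.subset_union_right,
    bwInner, Finset.mul_sum]
  refine Finset.sum_congr rfl fun j _ => ?_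
  rw [MvPolynomial.coeff_smul, smul_eq_mul]; ring

lemma bwInner_sub_left (p q r : MvPolynomial (Fin m) ℝ) :
    bwInner (p - q) r = bwInner p r - bwInner q r := by
  have : p - q = p + (-1 : ℝ) • q := by ring_nf; rw [neg_one_smul]; ring
  rw [this, bwInner_add_left, bwInner_smul_left]; ring

lemma bwInner_add_right (p q r : MvPolynomial (Fin m) ℝ) :
    bwInner p (q + r) = bwInner p q + bwInner p r := by
  rw [bwInner_comm, bwInner_add_left, bwInner_comm q p, bwInner_comm r p]

lemma bwInner_smul_right (c : ℝ) (p r : MvPolynomial (Fin m) ℝ) :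
    bwInner p (c • r) = c * bwInner p r := by
  rw [bwInner_comm, bwInner_smul_left, bwInner_comm r p]

lemma bwInner_sub_right (p q r : MvPolynomial (Fin m) ℝ) :
    bwInner p (q - r) = bwInner p q - bwInner p r := by
  rw [bwInner_comm, bwInner_sub_left, bwInner_comm q p, bwInner_comm r p]

lemma bwInner_sum_left {ι : Type*} (s : Finset ι) (p : ι → MvPolynomial (Fin m) ℝ)
    (r : MvPolynomial (Fin m) ℝ) :
    bwInner (∑ i ∈ s, p i) r = ∑ i ∈ s, bwInner (p i) r := by
  classical
  induction s using Finset.induction_on with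
  | empty => simp [bwInner]
  | insert _ _ h ih => rw [Finset.sum_insert h, Finset.sum_insert h, bwInner_add_left, ih]

lemma bwInner_self_nonneg (p : MvPolynomial (Fin m) ℝ) : 0 ≤ bwInner p p := by
  refine Finset.sum_nonneg fun j _ => div_nonneg (mul_self_nonneg _) (Nat.cast_nonneg _)

lemma mul_pos_of_ne_zero {a : ℝ} (ha : a ≠ 0) : 0 < a * a := mul_self_pos.mpr ha

lemma bwInner_self_pos {p : MvPolynomial (Fin m) ℝ} (hp : p ≠ 0) : 0 < bwInner p p := by
  obtain ⟨j, hj⟩ : p.support.Nonempty := MvPolynomial.support_nonempty.mpr hp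
  refine Finset.sum_pos' (fun j _ => div_nonneg (mul_self_nonneg _) (Nat.cast_nonneg _))
    ⟨j, Finset.mem_union_left _ hj, ?_⟩
  have h0 : p.coeff j ≠ 0 := MvPolynomial.mem_support_iff.mp hj
  exact div_pos (mul_pos_of_ne_zero h0) (by exact_mod_cast Nat.multinomial_pos _ _)

end BW

noncomputable def linForm {m : ℕ} (y : Fin m → ℝ) : MvPolynomial (Fin m) ℝ :=
  ∑ k, MvPolynomial.C (y k) * MvPolynomial.X k

namespace BW
variable {m : ℕ}

lemma linForm_isHomogeneous (y : Fin m → ℝ) : (linForm y).IsHomogeneous 1 :=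
  MvPolynomial.IsHomogeneous.sum _ _ _ fun k _ =>
    (MvPolynomial.isHomogeneous_X _ _).C_mul _

lemma eval_linForm (z y : Fin m → ℝ) : MvPolynomial.eval z (linForm y) = ∑ k, y k * z k := by
  simp [linForm]

lemma degree_eq_sum_univ (j : Fin m →₀ ℕ) : ∑ k ∈ j.support, j k = ∑ k, j k :=
  Finset.sum_subset (Finset.subset_univ _) (fun i _ hi => Finsupp.notMem_support_iff.mp hi)

lemma mem_support_homog {p : MvPolynomial (Fin m) ℝ} {d : ℕ} (hp : p.IsHomogeneous d)
    {j : Fin m →₀ ℕ} (hj : j ∈ p.support) : ∑ k, j k = d := by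
  by_contra h
  exact MvPolynomial.mem_support_iff.mp hj
    (hp.coeff_eq_zero (by rwa [Finsupp.degree_apply, degree_eq_sum_univ]))

lemma prod_pow_eq (x : Fin m → ℝ) (j : Fin m →₀ ℕ) :
    (j.prod fun n e => x n ^ e) = ∏ k, x k ^ j k := by
  rw [Finsupp.prod]
  exact Finset.prod_subset (Finset.subset_univ _)
    (fun i _ hi => by rw [Finsupp.notMem_support_iff.mp hi, pow_zero])

lemma coeff_linForm_pow {y : Fin m → ℝ} {d : ℕ} {j : Fin m →₀ ℕ} (hj : ∑ k, j k = d) :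
    MvPolynomial.coeff j (linForm y ^ d)
      = (Nat.multinomial Finset.univ ⇑j : ℝ) * ∏ k, y k ^ j k := by
  classical
  rw [linForm, Finset.sum_pow_eq_sum_piAntidiag, MvPolynomial.coeff_sum]
  have hterm : ∀ k : Fin m → ℕ,
      (Nat.multinomial Finset.univ k : MvPolynomial (Fin m) ℝ) *
        ∏ i, (MvPolynomial.C (y i) * MvPolynomial.X i) ^ k i
      = MvPolynomial.monomial (Finsupp.equivFunOnFinite.symm k)
          ((Nat.multinomial Finset.univ k : ℝ) * ∏ i, y i ^ k i) := by
    intro k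
    have h1 : ∀ i : Fin m, (MvPolynomial.C (y i) * MvPolynomial.X i) ^ k i
        = MvPolynomial.C (y i ^ k i) * MvPolynomial.X i ^ k i := by
      intro i; rw [mul_pow, map_pow]
    simp_rw [h1]
    rw [Finset.prod_mul_distrib, ← map_prod]
    have h2 : (∏ i, (MvPolynomial.X i : MvPolynomial (Fin m) ℝ) ^ k i)
        = MvPolynomial.monomial (Finsupp.equivFunOnFinite.symm k) (1 : ℝ) := by
      rw [← MvPolynomial.prod_X_pow_eq_monomial]
      refine (Finset.prod_subset (Finset.subset_univ _) ?_).symm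
      intro i _ hi
      have : k i = 0 := Finsupp.notMem_support_iff.mp hi
      rw [this, pow_zero]
    rw [h2, ← MvPolynomial.C_eq_coe_nat, MvPolynomial.C_mul_monomial,
      MvPolynomial.C_mul_monomial, mul_one, mul_comm]
  rw [Finset.sum_congr rfl (fun k _ => by rw [hterm k])]
  rw [Finset.sum_eq_single (⇑j)]
  · rw [Finsupp.equivFunOnFinite_symm_coe, MvPolynomial.coeff_monomial, if_pos rfl]
  · intro k hk hne
    rw [MvPolynomial.coeff_monomial, if_neg]
    intro hEq
    exact hne (by rw [← hEq]; rfl)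
  · intro hj'
    exact absurd (Finset.mem_piAntidiag.mpr ⟨hj, fun i _ => Finset.mem_univ i⟩) hj'

end BW

namespace BW
variable {m : ℕ}

/-- Reproducing property R1. -/
lemma bwInner_reproducing {p : MvPolynomial (Fin m) ℝ} {d : ℕ} (hp : p.IsHomogeneous d)
    (y : Fin m → ℝ) : bwInner p (linForm y ^ d) = MvPolynomial.eval y p := by
  rw [bwInner, MvPolynomial.eval_eq']
  rw [← Finset.sum_subset (Finset.subset_union_left :
      p.support ⊆ p.support ∪ (linForm y ^ d).support)
    (fun j _ hj => by rw [MvPolynomial.notMem_support_iff.mp hj, zero_mul, zero_div])]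
  refine Finset.sum_congr rfl fun j hj => ?_
  rw [coeff_linForm_pow (mem_support_homog hp hj)]
  have hmult : (Nat.multinomial Finset.univ ⇑j : ℝ) ≠ 0 := by
    exact_mod_cast (Nat.multinomial_pos _ _).ne'
  field_simp

lemma bwInner_monomial_left (j : Fin m →₀ ℕ) (c : ℝ) (q : MvPolynomial (Fin m) ℝ) :
    bwInner (MvPolynomial.monomial j c) q
      = c * MvPolynomial.coeff j q / (Nat.multinomial Finset.univ ⇑j : ℝ) := by
  rw [bwInner_eq_sum (u := insert j q.support)
    ((MvPolynomial.support_monomial_subset).trans (Finset.singleton_subset_iff.mpr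
      (Finset.mem_insert_self _ _))) (Finset.subset_insert _ _)]
  rw [Finset.sum_eq_single j]
  · rw [MvPolynomial.coeff_monomial, if_pos rfl]
  · intro j' _ hne
    rw [MvPolynomial.coeff_monomial, if_neg (fun h => hne h.symm), zero_mul, zero_div]
  · intro h; exact absurd (Finset.mem_insert_self _ _) h

lemma sum_sub_single {j : Fin m →₀ ℕ} {k : Fin m} (hk : 1 ≤ j k) :
    ∑ i, (j - Finsupp.single k 1 : Fin m →₀ ℕ) i = (∑ i, j i) - 1 := by
  simp_rw [Finsupp.tsub_apply]
  rw [Finset.sum_tsub_distrib Finset.univ (f := ⇑j) (g := ⇑(Finsupp.single k 1)) (fun i _ => by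
    rw [Finsupp.single_apply]
    split
    · next h => exact h ▸ hk
    · exact Nat.zero_le _)]
  congr 1
  simp [Finsupp.single_apply]

lemma mult_sub_single {j : Fin m →₀ ℕ} {d : ℕ} {k : Fin m} (hj : ∑ i, j i = d)
    (hk : 1 ≤ j k) :
    d * Nat.multinomial Finset.univ ⇑(j - Finsupp.single k 1 : Fin m →₀ ℕ)
      = j k * Nat.multinomial Finset.univ ⇑j := by
  have hd : 1 ≤ d := hk.trans (hj ▸ Finset.single_le_sum (fun i _ => Nat.zero_le _)
    (Finset.mem_univ k))
  set j' : Fin m →₀ ℕ := j - Finsupp.single k 1 with hj'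
  have happ : ∀ i, i ≠ k → j' i = j i := by
    intro i hi
    rw [hj', Finsupp.tsub_apply, Finsupp.single_apply, if_neg (fun h => hi h.symm), Nat.sub_zero]
  have happk : j' k = j k - 1 := by
    rw [hj', Finsupp.tsub_apply, Finsupp.single_apply, if_pos rfl]
  have hsum' : ∑ i, j' i = d - 1 := by rw [hj', sum_sub_single hk, hj]
  have hP : ∏ i, Nat.factorial (j i) = j k * ∏ i, Nat.factorial (j' i) := by
    rw [← Finset.mul_prod_erase _ _ (Finset.mem_univ k),
      ← Finset.mul_prod_erase _ (fun i => Nat.factorial (j' i)) (Finset.mem_univ k)]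
    have hcongr : ∀ i ∈ Finset.univ.erase k, Nat.factorial (j' i) = Nat.factorial (j i) := by
      intro i hi; rw [happ i (Finset.mem_erase.mp hi).1]
    rw [Finset.prod_congr rfl hcongr, happk, ← mul_assoc]
    congr 1
    rw [← Nat.mul_factorial_pred (Nat.one_le_iff_ne_zero.mp hk)]
  have spec1 := Nat.multinomial_spec Finset.univ ⇑j
  have spec2 := Nat.multinomial_spec Finset.univ ⇑j'
  rw [hj] at spec1
  rw [show ∑ i, j' i = d - 1 from hsum'] at spec2
  set P := ∏ i, Nat.factorial (j i) with hPdef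
  set P' := ∏ i, Nat.factorial (j' i) with hP'def
  set M := Nat.multinomial Finset.univ ⇑j
  set M' := Nat.multinomial Finset.univ ⇑j'
  have hPpos : 0 < P := Finset.prod_pos fun i _ => Nat.factorial_pos _
  refine Nat.eq_of_mul_eq_mul_left hPpos ?_
  have e1 : P * (d * M') = j k * d * (P' * M') := by rw [hP]; ring
  rw [spec2] at e1
  have e2 : P * (j k * M) = j k * (P * M) := by ring
  rw [spec1] at e2
  rw [e1, e2, mul_assoc, Nat.mul_factorial_pred (Nat.one_le_iff_ne_zero.mp hd)]

end BW

namespace BW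
variable {m : ℕ}

lemma bwInner_deriv_monomial {j : Fin m →₀ ℕ} {d : ℕ} (hj : ∑ i, j i = d) (hd : 1 ≤ d)
    (c : ℝ) (x v : Fin m → ℝ) :
    (d : ℝ) * bwInner (MvPolynomial.monomial j c) (linForm x ^ (d - 1) * linForm v)
      = ∑ k, MvPolynomial.eval x (MvPolynomial.pderiv k (MvPolynomial.monomial j c)) * v k := by
  classical
  have hcoeff : MvPolynomial.coeff j (linForm x ^ (d - 1) * linForm v)
      = ∑ k, v k * (if k ∈ j.support
          then (Nat.multinomial Finset.univ ⇑(j - Finsupp.single k 1 : Fin m →₀ ℕ) : ℝ)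
            * ∏ i, x i ^ (j - Finsupp.single k 1 : Fin m →₀ ℕ) i
          else 0) := by
    have hexp : linForm x ^ (d - 1) * linForm v
        = ∑ k, MvPolynomial.C (v k) * (linForm x ^ (d - 1) * MvPolynomial.X k) := by
      rw [show linForm v = ∑ k, MvPolynomial.C (v k) * MvPolynomial.X k from rfl,
        Finset.mul_sum]
      exact Finset.sum_congr rfl fun k _ => by ring
    rw [hexp, MvPolynomial.coeff_sum]
    refine Finset.sum_congr rfl fun k _ => ?_
    rw [MvPolynomial.coeff_C_mul, MvPolynomial.coeff_mul_X']
    congr 1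
    split
    · next hk =>
      exact coeff_linForm_pow (by
        rw [sum_sub_single (Nat.one_le_iff_ne_zero.mpr (Finsupp.mem_support_iff.mp hk)), hj])
    · rfl
  rw [bwInner_monomial_left, hcoeff]
  have hM : (Nat.multinomial Finset.univ ⇑j : ℝ) ≠ 0 := by
    exact_mod_cast (Nat.multinomial_pos _ _).ne'
  rw [show (d : ℝ) * (c * (∑ k, v k * _) / (Nat.multinomial Finset.univ ⇑j : ℝ))
      = ∑ k, (d : ℝ) * c * (v k * (if k ∈ j.support
          then (Nat.multinomial Finset.univ ⇑(j - Finsupp.single k 1 : Fin m →₀ ℕ) : ℝ)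
            * ∏ i, x i ^ (j - Finsupp.single k 1 : Fin m →₀ ℕ) i
          else 0)) / (Nat.multinomial Finset.univ ⇑j : ℝ) from by
    rw [Finset.mul_sum, Finset.sum_div, Finset.mul_sum]
    exact Finset.sum_congr rfl fun k _ => by ring]
  refine Finset.sum_congr rfl fun k _ => ?_
  rw [MvPolynomial.pderiv_monomial, MvPolynomial.eval_monomial, prod_pow_eq]
  by_cases hk : k ∈ j.support
  · rw [if_pos hk]
    have hjk : 1 ≤ j k := Nat.one_le_iff_ne_zero.mpr (Finsupp.mem_support_iff.mp hk)
    have hid : ((d : ℝ)) * (Nat.multinomial Finset.univ ⇑(j - Finsupp.single k 1 : Fin m →₀ ℕ) : ℝ)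
        = (j k : ℝ) * (Nat.multinomial Finset.univ ⇑j : ℝ) := by
      exact_mod_cast congrArg (Nat.cast (R := ℝ)) (mult_sub_single hj hjk)
    rw [div_eq_iff hM]
    linear_combination (c * v k * (∏ i, x i ^ (j - Finsupp.single k 1 : Fin m →₀ ℕ) i)) * hid
  · rw [if_neg hk]
    have : j k = 0 := Finsupp.notMem_support_iff.mp hk
    rw [this]
    simp

end BW

namespace BW
variable {m : ℕ}

/-- General R2: derivative formula. -/
lemma bwInner_deriv {p : MvPolynomial (Fin m) ℝ} {d : ℕ} (hp : p.IsHomogeneous d) (hd : 1 ≤ d)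
    (x v : Fin m → ℝ) :
    (d : ℝ) * bwInner p (linForm x ^ (d - 1) * linForm v)
      = ∑ k, MvPolynomial.eval x (MvPolynomial.pderiv k p) * v k := by
  have hrep := p.support_sum_monomial_coeff
  calc (d : ℝ) * bwInner p (linForm x ^ (d - 1) * linForm v)
      = (d : ℝ) * ∑ j ∈ p.support, bwInner (MvPolynomial.monomial j (MvPolynomial.coeff j p))
          (linForm x ^ (d - 1) * linForm v) := by rw [← bwInner_sum_left, hrep]
    _ = ∑ j ∈ p.support, (d : ℝ) * bwInner (MvPolynomial.monomial j (MvPolynomial.coeff j p))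
          (linForm x ^ (d - 1) * linForm v) := Finset.mul_sum _ _ _
    _ = ∑ j ∈ p.support, ∑ k, MvPolynomial.eval x
          (MvPolynomial.pderiv k (MvPolynomial.monomial j (MvPolynomial.coeff j p))) * v k :=
        Finset.sum_congr rfl fun j hj =>
          bwInner_deriv_monomial (mem_support_homog hp hj) hd _ x v
    _ = ∑ k, ∑ j ∈ p.support, MvPolynomial.eval x
          (MvPolynomial.pderiv k (MvPolynomial.monomial j (MvPolynomial.coeff j p))) * v k :=
        Finset.sum_comm
    _ = ∑ k, MvPolynomial.eval x (MvPolynomial.pderiv k p) * v k := by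
        refine Finset.sum_congr rfl fun k _ => ?_
        rw [← Finset.sum_mul]
        congr 1
        rw [← map_sum, ← map_sum, hrep]

lemma pderiv_linForm (y : Fin m → ℝ) (k : Fin m) :
    MvPolynomial.pderiv k (linForm y) = MvPolynomial.C (y k) := by
  rw [linForm, map_sum]
  simp only [MvPolynomial.pderiv_C_mul, MvPolynomial.pderiv_X]
  rw [Finset.sum_eq_single k]
  · rw [Pi.single_eq_same, mul_one]
  · intro i _ hne
    rw [Pi.single_eq_of_ne hne, mul_zero]
  · intro h; exact absurd (Finset.mem_univ k) h

variable {x v : Fin m → ℝ}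

section Kernel
variable (hx : ∑ k, x k ^ 2 = 1) (hv : ∑ k, v k ^ 2 = 1) (hxv : ∑ k, v k * x k = 0)

include hx in
lemma eval_P (d : ℕ) : MvPolynomial.eval x (linForm x ^ d) = 1 := by
  rw [map_pow, eval_linForm]
  rw [show ∑ k, x k * x k = 1 from by rw [← hx]; exact Finset.sum_congr rfl fun k _ => (sq (x k)).symm]
  exact one_pow d

include hx hxv in
lemma eval_Q (d : ℕ) : MvPolynomial.eval x (linForm x ^ (d - 1) * linForm v) = 0 := by
  rw [map_mul, eval_P hx, eval_linForm, one_mul, hxv]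

include hx in
lemma bwInner_PP {d : ℕ} : bwInner (linForm x ^ d) (linForm x ^ d) = 1 := by
  have h1 : (linForm x ^ d).IsHomogeneous d := by
    have := (linForm_isHomogeneous x).pow d; rwa [one_mul] at this
  rw [bwInner_reproducing h1 x, eval_P hx]

lemma isHomog_Q (d : ℕ) (hd : 1 ≤ d) :
    (linForm x ^ (d - 1) * linForm v).IsHomogeneous d := by
  have := ((linForm_isHomogeneous x).pow (d - 1)).mul (linForm_isHomogeneous v)
  rwa [show 1 * (d - 1) + 1 = d from by omega] at this

include hx hxv in
lemma bwInner_QP {d : ℕ} (hd : 1 ≤ d) :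
    bwInner (linForm x ^ (d - 1) * linForm v) (linForm x ^ d) = 0 := by
  rw [bwInner_reproducing (isHomog_Q d hd) x, eval_Q hx hxv]

include hx hv hxv in
lemma deriv_Q {d : ℕ} (hd : 1 ≤ d) :
    ∑ k, MvPolynomial.eval x (MvPolynomial.pderiv k (linForm x ^ (d - 1) * linForm v)) * v k
      = 1 := by
  have hterm : ∀ k, MvPolynomial.eval x
      (MvPolynomial.pderiv k (linForm x ^ (d - 1) * linForm v)) = v k := by
    intro k
    rw [MvPolynomial.pderiv_mul, MvPolynomial.pderiv_pow, pderiv_linForm, pderiv_linForm]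
    simp only [map_add, map_mul, map_natCast, MvPolynomial.eval_C, eval_P hx, eval_linForm,
      hxv, mul_zero, zero_mul, zero_add, one_mul, mul_one]
  rw [Finset.sum_congr rfl fun k _ => by rw [hterm k]]
  rw [← hv]
  exact Finset.sum_congr rfl fun k _ => (sq (v k)).symm

include hx hv hxv in
lemma bwInner_QQ {d : ℕ} (hd : 1 ≤ d) :
    bwInner (linForm x ^ (d - 1) * linForm v) (linForm x ^ (d - 1) * linForm v)
      = 1 / (d : ℝ) := by
  have := bwInner_deriv (isHomog_Q (x := x) (v := v) d hd) hd x v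
  rw [deriv_Q hx hv hxv hd] at this
  have hd0 : (d : ℝ) ≠ 0 := by exact_mod_cast Nat.one_le_iff_ne_zero.mp hd
  field_simp
  linarith [this]

end Kernel

/-- Bessel-type inequality for two orthogonal vectors. -/
lemma bessel {h p q : MvPolynomial (Fin m) ℝ} {c : ℝ} (hc : 0 < c)
    (hpp : bwInner p p = 1) (hqq : bwInner q q = c) (hpq : bwInner p q = 0) :
    (bwInner h p) ^ 2 + (bwInner h q) ^ 2 / c ≤ bwInner h h := by
  have key := bwInner_self_nonneg (h - (bwInner h p) • p - ((bwInner h q) / c) • q)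
  simp only [bwInner_sub_left, bwInner_sub_right, bwInner_smul_left, bwInner_smul_right,
    hpp, hqq, hpq, bwInner_comm q p, bwInner_comm p h, bwInner_comm q h] at key
  have hc' : c ≠ 0 := hc.ne'
  field_simp at key ⊢
  nlinarith [key]

end BW

namespace BW

lemma exists_unit_perp {n : ℕ} (hn : 1 ≤ n) {x : Fin (n + 1) → ℝ}
    (hx : ∑ k, x k ^ 2 = 1) :
    ∃ v : Fin (n + 1) → ℝ, (∑ k, v k * x k = 0) ∧ (∑ k, v k ^ 2 = 1) := by
  classical
  obtain ⟨k₀, hk₀⟩ : ∃ k, x k ≠ 0 := by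
    by_contra h
    push_neg at h
    simp [h] at hx
  have : Nontrivial (Fin (n + 1)) := Fin.nontrivial_iff_two_le.mpr (by omega)
  obtain ⟨k₁, hk₁⟩ := exists_ne k₀
  set w : Fin (n + 1) → ℝ := fun k => if k = k₁ then x k₀ else if k = k₀ then -(x k₁) else 0
    with hw
  set s : ℝ := x k₀ ^ 2 + x k₁ ^ 2 with hsdef
  have hs : 0 < s := by positivity
  have hw1 : ∑ k, w k * x k = 0 := by
    have hpt : ∀ k, w k * x k
        = (if k = k₁ then x k₀ * x k₁ else 0) + (if k = k₀ then -(x k₁ * x k₀) else 0) := by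
      intro k
      simp only [hw]
      by_cases h1 : k = k₁
      · rw [if_pos h1, if_pos h1, if_neg (fun h => hk₁ (h1.symm.trans h)), add_zero, h1]
      · by_cases h2 : k = k₀
        · rw [if_neg h1, if_neg h1, if_pos h2, if_pos h2, zero_add, h2]
          ring
        · rw [if_neg h1, if_neg h1, if_neg h2, if_neg h2, zero_mul, add_zero]
    rw [Finset.sum_congr rfl (fun k _ => hpt k), Finset.sum_add_distrib,
      Finset.sum_ite_eq' Finset.univ k₁ (fun _ => x k₀ * x k₁),
      Finset.sum_ite_eq' Finset.univ k₀ (fun _ => -(x k₁ * x k₀))]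
    simp [mul_comm]
  have hw2 : ∑ k, w k ^ 2 = s := by
    have hpt : ∀ k, w k ^ 2
        = (if k = k₁ then x k₀ ^ 2 else 0) + (if k = k₀ then x k₁ ^ 2 else 0) := by
      intro k
      simp only [hw]
      by_cases h1 : k = k₁
      · rw [if_pos h1, if_pos h1, if_neg (fun h => hk₁ (h1.symm.trans h)), add_zero]
      · by_cases h2 : k = k₀
        · rw [if_neg h1, if_neg h1, if_pos h2, if_pos h2, zero_add]
          ring
        · rw [if_neg h1, if_neg h1, if_neg h2, if_neg h2, add_zero]
          norm_num
    rw [Finset.sum_congr rfl (fun k _ => hpt k), Finset.sum_add_distrib,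
      Finset.sum_ite_eq' Finset.univ k₁ (fun _ => x k₀ ^ 2),
      Finset.sum_ite_eq' Finset.univ k₀ (fun _ => x k₁ ^ 2)]
    simp [hsdef]
  refine ⟨fun k => w k / Real.sqrt s, ?_, ?_⟩
  · simp_rw [div_mul_eq_mul_div, ← Finset.sum_div, hw1, zero_div]
  · simp_rw [div_pow, Real.sq_sqrt hs.le, ← Finset.sum_div, hw2, div_self hs.ne']

variable {n : ℕ} {d : Fin n → ℕ} {f : Fin n → MvPolynomial (Fin (n + 1)) ℝ}
  {x : Fin (n + 1) → ℝ}

lemma isHomog_P (x : Fin (n + 1) → ℝ) (e : ℕ) : (linForm x ^ e).IsHomogeneous e := by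
  have := (linForm_isHomogeneous x).pow e; rwa [one_mul] at this

/-- The explicit minimizing perturbation. -/
lemma construct_mem (hd : ∀ i, 1 ≤ d i) (hf : IsSystem d f)
    (hx : ∑ k, x k ^ 2 = 1) {v : Fin (n + 1) → ℝ}
    (hv : ∑ k, v k ^ 2 = 1) (hxv : ∑ k, v k * x k = 0) :
    ∃ g ∈ SigmaRx d x, ∑ i, bwInner ((f - g) i) ((f - g) i)
        = (∑ i, (MvPolynomial.eval x (f i)) ^ 2)
          + ∑ i, (∑ k, MvPolynomial.eval x (MvPolynomial.pderiv k (f i)) * v k) ^ 2 / (d i) := by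
  classical
  set Dv : Fin n → ℝ := fun i => ∑ k, MvPolynomial.eval x (MvPolynomial.pderiv k (f i)) * v k
    with hDv
  set P : Fin n → MvPolynomial (Fin (n + 1)) ℝ := fun i => linForm x ^ d i with hP
  set Q : Fin n → MvPolynomial (Fin (n + 1)) ℝ :=
    fun i => linForm x ^ (d i - 1) * linForm v with hQ
  set g : Fin n → MvPolynomial (Fin (n + 1)) ℝ :=
    fun i => f i - MvPolynomial.eval x (f i) • P i - Dv i • Q i with hg
  have hPhom : ∀ i, (P i).IsHomogeneous (d i) := fun i => isHomog_P x (d i)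
  have hQhom : ∀ i, (Q i).IsHomogeneous (d i) := fun i => isHomog_Q (d i) (hd i)
  have hghom : IsSystem d g := by
    intro i
    refine ((hf i).sub ?_).sub ?_
    · rw [MvPolynomial.smul_eq_C_mul]; exact (hPhom i).C_mul _
    · rw [MvPolynomial.smul_eq_C_mul]; exact (hQhom i).C_mul _
  have hgeval : ∀ i, MvPolynomial.eval x (g i) = 0 := by
    intro i
    rw [hg]
    simp only [map_sub, MvPolynomial.smul_eval]
    rw [hP, hQ]
    rw [eval_P hx, eval_Q hx hxv]
    ring
  have hvne : v ≠ 0 := by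
    intro h0
    rw [h0] at hv
    simp at hv
  have hDvP : ∀ i, ∑ k, MvPolynomial.eval x (MvPolynomial.pderiv k (P i)) * v k = 0 := by
    intro i
    have h := bwInner_deriv (hPhom i) (hd i) x v
    rw [bwInner_comm, bwInner_QP hx hxv (hd i), mul_zero] at h
    exact h.symm
  have hDvQ : ∀ i, ∑ k, MvPolynomial.eval x (MvPolynomial.pderiv k (Q i)) * v k = 1 :=
    fun i => deriv_Q hx hv hxv (hd i)
  have hgsing : SingularAt g x := by
    refine ⟨v, hvne, hxv, fun i => ?_⟩
    have hexp : ∀ k, MvPolynomial.eval x (MvPolynomial.pderiv k (g i))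
        = MvPolynomial.eval x (MvPolynomial.pderiv k (f i))
          - MvPolynomial.eval x (f i) * MvPolynomial.eval x (MvPolynomial.pderiv k (P i))
          - Dv i * MvPolynomial.eval x (MvPolynomial.pderiv k (Q i)) := by
      intro k
      rw [hg]
      simp only [MvPolynomial.smul_eq_C_mul, map_sub, MvPolynomial.pderiv_C_mul, map_mul,
        MvPolynomial.eval_C]
      try ring
    rw [Finset.sum_congr rfl (fun k _ => by rw [hexp k])]
    simp_rw [sub_mul]
    rw [Finset.sum_sub_distrib, Finset.sum_sub_distrib]
    simp_rw [mul_assoc]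
    rw [← Finset.mul_sum, ← Finset.mul_sum, hDvP i, hDvQ i, mul_zero, mul_one]
    simp [hDv]
  refine ⟨g, ⟨hghom, hgeval, hgsing⟩, ?_⟩
  have hfg : ∀ i, (f - g) i = MvPolynomial.eval x (f i) • P i + Dv i • Q i := by
    intro i
    rw [Pi.sub_apply, hg]
    simp only [sub_sub]
    abel
  have hterm : ∀ i, bwInner ((f - g) i) ((f - g) i)
      = (MvPolynomial.eval x (f i)) ^ 2 + (Dv i) ^ 2 / (d i) := by
    intro i
    rw [hfg i]
    rw [bwInner_add_left, bwInner_add_right, bwInner_add_right,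
      bwInner_smul_left, bwInner_smul_left, bwInner_smul_right, bwInner_smul_right,
      bwInner_smul_left, bwInner_smul_right, bwInner_smul_left, bwInner_smul_right]
    rw [hP, hQ]
    rw [bwInner_PP hx, bwInner_QQ hx hv hxv (hd i), bwInner_QP hx hxv (hd i),
      bwInner_comm (linForm x ^ d i), bwInner_QP hx hxv (hd i)]
    field_simp
    ring
  rw [Finset.sum_congr rfl (fun i _ => hterm i), Finset.sum_add_distrib]

/-- Lower bound via Bessel's inequality. -/
lemma lower_bound (hd : ∀ i, 1 ≤ d i) (hf : IsSystem d f)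
    (hx : ∑ k, x k ^ 2 = 1) {g : Fin n → MvPolynomial (Fin (n + 1)) ℝ}
    (hg : g ∈ SigmaRx d x) :
    sigmaMin d f x ^ 2 + ∑ i, (MvPolynomial.eval x (f i)) ^ 2
      ≤ ∑ i, bwInner ((f - g) i) ((f - g) i) := by
  obtain ⟨hgsys, hgeval, w, hw0, hwx, hwD⟩ := hg
  have hs : 0 < ∑ k, w k ^ 2 := by
    obtain ⟨k0, hk0⟩ := Function.ne_iff.mp hw0
    exact Finset.sum_pos' (fun k _ => sq_nonneg _)
      ⟨k0, Finset.mem_univ _, lt_of_le_of_ne (sq_nonneg _) (Ne.symm (pow_ne_zero 2 hk0))⟩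
  set s : ℝ := Real.sqrt (∑ k, w k ^ 2) with hsdef
  have hs' : 0 < s := Real.sqrt_pos.mpr hs
  set u : Fin (n + 1) → ℝ := fun k => w k / s with hu
  have hu1 : ∑ k, u k ^ 2 = 1 := by
    simp_rw [hu, div_pow, ← Finset.sum_div, hsdef, Real.sq_sqrt hs.le]
    exact div_self hs.ne'
  have hux : ∑ k, u k * x k = 0 := by
    simp_rw [hu, div_mul_eq_mul_div, ← Finset.sum_div, hwx, zero_div]
  have huD : ∀ i, ∑ k, MvPolynomial.eval x (MvPolynomial.pderiv k (g i)) * u k = 0 := by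
    intro i
    simp_rw [hu, div_eq_mul_inv, ← mul_assoc, ← Finset.sum_mul, hwD i, zero_mul]
  -- per-component Bessel inequality
  have hkey : ∀ i, (MvPolynomial.eval x (f i)) ^ 2
      + (∑ k, MvPolynomial.eval x (MvPolynomial.pderiv k (f i)) * u k) ^ 2 / (d i)
      ≤ bwInner ((f - g) i) ((f - g) i) := by
    intro i
    have hdi : (0 : ℝ) < d i := by exact_mod_cast hd i
    have hhom : (f i - g i).IsHomogeneous (d i) := (hf i).sub (hgsys i)
    have hbes := bessel (h := f i - g i) (p := linForm x ^ d i)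
      (q := linForm x ^ (d i - 1) * linForm u) (c := 1 / (d i : ℝ))
      (by positivity) (bwInner_PP hx) (bwInner_QQ hx hu1 hux (hd i))
      (by rw [bwInner_comm]; exact bwInner_QP hx hux (hd i))
    have hP : bwInner (f i - g i) (linForm x ^ d i) = MvPolynomial.eval x (f i) := by
      rw [bwInner_reproducing hhom x, map_sub, hgeval i, sub_zero]
    have hQ : bwInner (f i - g i) (linForm x ^ (d i - 1) * linForm u)
        = (∑ k, MvPolynomial.eval x (MvPolynomial.pderiv k (f i)) * u k) / (d i) := by
      have h := bwInner_deriv hhom (hd i) x u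
      have hsub : ∑ k, MvPolynomial.eval x (MvPolynomial.pderiv k (f i - g i)) * u k
          = ∑ k, MvPolynomial.eval x (MvPolynomial.pderiv k (f i)) * u k := by
        simp only [map_sub, sub_mul, Finset.sum_sub_distrib, huD i, sub_zero]
      rw [hsub] at h
      rw [eq_div_iff (ne_of_gt hdi)]
      linarith [h]
    rw [hP, hQ] at hbes
    have halg : ((∑ k, MvPolynomial.eval x (MvPolynomial.pderiv k (f i)) * u k) / (d i : ℝ)) ^ 2
        / (1 / (d i : ℝ))
        = (∑ k, MvPolynomial.eval x (MvPolynomial.pderiv k (f i)) * u k) ^ 2 / (d i : ℝ) := by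
      field_simp
    rw [halg] at hbes
    exact hbes
  -- combine
  have hsum : (∑ i, (MvPolynomial.eval x (f i)) ^ 2)
      + ∑ i, (∑ k, MvPolynomial.eval x (MvPolynomial.pderiv k (f i)) * u k) ^ 2 / (d i)
      ≤ ∑ i, bwInner ((f - g) i) ((f - g) i) := by
    rw [← Finset.sum_add_distrib]
    exact Finset.sum_le_sum fun i _ => hkey i
  have hbdd : BddBelow ((fun v => Real.sqrt (∑ i,
      ((∑ k, MvPolynomial.eval x (MvPolynomial.pderiv k (f i)) * v k) / Real.sqrt (d i)) ^ 2)) ''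
      {v : Fin (n + 1) → ℝ | (∑ k, v k * x k = 0) ∧ ∑ k, v k ^ 2 = 1}) := by
    refine ⟨0, fun b hb => ?_⟩
    obtain ⟨v', _, rfl⟩ := hb
    exact Real.sqrt_nonneg _
  have hσle : sigmaMin d f x ≤ Real.sqrt (∑ i,
      ((∑ k, MvPolynomial.eval x (MvPolynomial.pderiv k (f i)) * u k) / Real.sqrt (d i)) ^ 2) :=
    csInf_le hbdd ⟨u, ⟨hux, hu1⟩, rfl⟩
  have hσ0 : 0 ≤ sigmaMin d f x := by
    refine Real.sInf_nonneg fun b hb => ?_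
    obtain ⟨v', _, rfl⟩ := hb
    exact Real.sqrt_nonneg _
  have hconv : ∑ i, ((∑ k, MvPolynomial.eval x (MvPolynomial.pderiv k (f i)) * u k)
        / Real.sqrt (d i)) ^ 2
      = ∑ i, (∑ k, MvPolynomial.eval x (MvPolynomial.pderiv k (f i)) * u k) ^ 2 / (d i) := by
    refine Finset.sum_congr rfl fun i _ => ?_
    rw [div_pow, Real.sq_sqrt (by positivity : (0:ℝ) ≤ (d i : ℝ))]
  have hσsq : sigmaMin d f x ^ 2
      ≤ ∑ i, (∑ k, MvPolynomial.eval x (MvPolynomial.pderiv k (f i)) * u k) ^ 2 / (d i) := by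
    have h1 := pow_le_pow_left₀ hσ0 hσle 2
    rwa [Real.sq_sqrt (by positivity), hconv] at h1
  linarith [hsum, hσsq]

end BW

namespace BW

variable {n : ℕ} {d : Fin n → ℕ} {f : Fin n → MvPolynomial (Fin (n + 1)) ℝ}

lemma bwNormSys_def (f : Fin n → MvPolynomial (Fin (n + 1)) ℝ) :
    bwNormSys f = Real.sqrt (∑ i, bwInner (f i) (f i)) := rfl

lemma sigmaMin_nonneg (d : Fin n → ℕ) (f : Fin n → MvPolynomial (Fin (n + 1)) ℝ)
    (x : Fin (n + 1) → ℝ) : 0 ≤ sigmaMin d f x := by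
  refine Real.sInf_nonneg fun b hb => ?_
  obtain ⟨v', _, rfl⟩ := hb
  exact Real.sqrt_nonneg _

/-- The distance from `f` to `Σ_ℝ(x)` equals `sqrt(σ² + ‖f(x)‖²)`. -/
lemma bwDist_sigmaRx (hn : 1 ≤ n) (hd : ∀ i, 1 ≤ d i) (hf : IsSystem d f)
    {x : Fin (n + 1) → ℝ} (hxS : x ∈ unitSphere n) :
    bwDist f (SigmaRx d x)
      = Real.sqrt (sigmaMin d f x ^ 2 + ∑ i, (MvPolynomial.eval x (f i)) ^ 2) := by
  have hx : ∑ k, x k ^ 2 = 1 := hxS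
  set σ := sigmaMin d f x with hσdef
  set A := ∑ i, (MvPolynomial.eval x (f i)) ^ 2 with hAdef
  have hA : 0 ≤ A := Finset.sum_nonneg fun i _ => sq_nonneg _
  have hσ0 : 0 ≤ σ := sigmaMin_nonneg d f x
  -- the constraint set is nonempty
  obtain ⟨v₀, hv₀x, hv₀1⟩ := exists_unit_perp hn hx
  have hVne : Set.Nonempty {v : Fin (n + 1) → ℝ | (∑ k, v k * x k = 0) ∧ ∑ k, v k ^ 2 = 1} :=
    ⟨v₀, hv₀x, hv₀1⟩
  obtain ⟨g₀, hg₀, _⟩ := construct_mem hd hf hx hv₀1 hv₀x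
  have hDne : ((fun g => bwNormSys (f - g)) '' SigmaRx d x).Nonempty :=
    ⟨_, Set.mem_image_of_mem _ hg₀⟩
  have hDbdd : BddBelow ((fun g => bwNormSys (f - g)) '' SigmaRx d x) := by
    refine ⟨0, fun b hb => ?_⟩
    obtain ⟨g, _, rfl⟩ := hb
    exact Real.sqrt_nonneg _
  refine le_antisymm ?_ ?_
  · -- upper bound
    refine le_of_forall_sub_le fun ε hε => ?_
    rw [sub_le_iff_le_add]
    have hlt : σ < Real.sqrt (σ ^ 2 + ε ^ 2) := by
      have h1 : σ ^ 2 < σ ^ 2 + ε ^ 2 := by nlinarith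
      calc σ = Real.sqrt (σ ^ 2) := (Real.sqrt_sq hσ0).symm
        _ < Real.sqrt (σ ^ 2 + ε ^ 2) := Real.sqrt_lt_sqrt (sq_nonneg _) h1
    obtain ⟨b, hbmem, hblt⟩ := exists_lt_of_csInf_lt (hVne.image _) hlt
    obtain ⟨v, ⟨hvx, hv1⟩, rfl⟩ := hbmem
    obtain ⟨g, hgmem, hgval⟩ := construct_mem hd hf hx hv1 hvx
    have hF0 : 0 ≤ Real.sqrt (∑ i,
        ((∑ k, MvPolynomial.eval x (MvPolynomial.pderiv k (f i)) * v k) / Real.sqrt (d i)) ^ 2) :=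
      Real.sqrt_nonneg _
    have hFsq : (∑ i, (∑ k, MvPolynomial.eval x (MvPolynomial.pderiv k (f i)) * v k) ^ 2 / (d i))
        < σ ^ 2 + ε ^ 2 := by
      have h2 := pow_lt_pow_left₀ hblt hF0 two_ne_zero
      rw [Real.sq_sqrt (Finset.sum_nonneg fun i _ => sq_nonneg _),
        Real.sq_sqrt (by positivity : (0:ℝ) ≤ σ ^ 2 + ε ^ 2)] at h2
      have hconv : ∑ i, ((∑ k, MvPolynomial.eval x (MvPolynomial.pderiv k (f i)) * v k)
            / Real.sqrt (d i)) ^ 2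
          = ∑ i, (∑ k, MvPolynomial.eval x (MvPolynomial.pderiv k (f i)) * v k) ^ 2 / (d i) := by
        refine Finset.sum_congr rfl fun i _ => ?_
        rw [div_pow, Real.sq_sqrt (by positivity : (0:ℝ) ≤ (d i : ℝ))]
      rwa [hconv] at h2
    have hnorm : bwNormSys (f - g) ≤ Real.sqrt (σ ^ 2 + A) + ε := by
      rw [bwNormSys_def, hgval]
      have h3 : A + (∑ i, (∑ k, MvPolynomial.eval x (MvPolynomial.pderiv k (f i)) * v k) ^ 2
          / (d i)) ≤ (σ ^ 2 + A) + ε ^ 2 := by linarith [hFsq]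
      calc Real.sqrt (A + _) ≤ Real.sqrt ((σ ^ 2 + A) + ε ^ 2) := Real.sqrt_le_sqrt h3
        _ ≤ Real.sqrt (σ ^ 2 + A) + ε := by
            have h4 : (σ ^ 2 + A) + ε ^ 2 ≤ (Real.sqrt (σ ^ 2 + A) + ε) ^ 2 := by
              nlinarith [Real.sq_sqrt (by positivity : (0:ℝ) ≤ σ ^ 2 + A),
                Real.sqrt_nonneg (σ ^ 2 + A), hε.le]
            calc Real.sqrt ((σ ^ 2 + A) + ε ^ 2)
                ≤ Real.sqrt ((Real.sqrt (σ ^ 2 + A) + ε) ^ 2) := Real.sqrt_le_sqrt h4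
              _ = Real.sqrt (σ ^ 2 + A) + ε := Real.sqrt_sq (by positivity)
    exact le_trans (csInf_le hDbdd (Set.mem_image_of_mem _ hgmem)) hnorm
  · -- lower bound
    refine le_csInf hDne ?_
    rintro b ⟨g, hg, rfl⟩
    have hlow := lower_bound hd hf hx hg
    show Real.sqrt _ ≤ bwNormSys (f - g)
    rw [bwNormSys_def]
    refine Real.sqrt_le_sqrt ?_
    exact hlow

lemma bwNormSys_pos (hf0 : f ≠ 0) : 0 < bwNormSys f := by
  obtain ⟨i0, hi0⟩ := Function.ne_iff.mp hf0
  refine Real.sqrt_pos.mpr (Finset.sum_pos' (fun i _ => bwInner_self_nonneg _)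
    ⟨i0, Finset.mem_univ _, bwInner_self_pos hi0⟩)

lemma sphere_nonempty (n : ℕ) : Set.Nonempty (unitSphere n) := by
  classical
  refine ⟨fun k => if k = 0 then 1 else 0, ?_⟩
  show ∑ k : Fin (n + 1), (if k = 0 then (1:ℝ) else 0) ^ 2 = 1
  have hpt : ∀ k : Fin (n + 1), (if k = 0 then (1:ℝ) else 0) ^ 2
      = if k = 0 then (1:ℝ) else 0 := by
    intro k
    split_ifs
    · rw [one_pow]
    · rw [zero_pow two_ne_zero]
  rw [Finset.sum_congr rfl fun k _ => hpt k,
    Finset.sum_ite_eq' Finset.univ (0 : Fin (n + 1)) (fun _ => (1:ℝ))]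
  simp

lemma sigmaRx_subset (d : Fin n → ℕ) {x : Fin (n + 1) → ℝ} (hxS : x ∈ unitSphere n) :
    SigmaRx d x ⊆ SigmaR d := fun g hg => Set.mem_biUnion hxS hg

/-- ℝ-level: distance to `Σ` is the inf of the per-point distances. -/
lemma bwDist_sigmaR_eq (hn : 1 ≤ n) (hd : ∀ i, 1 ≤ d i) (hf : IsSystem d f) :
    bwDist f (SigmaR d)
      = sInf ((fun x => bwDist f (SigmaRx d x)) '' unitSphere n) := by
  have hxmem : ∀ x ∈ unitSphere n, (∑ k, x k ^ 2 = 1) := fun x hx => hx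
  have hnonemptyx : ∀ x ∈ unitSphere n,
      ((fun g => bwNormSys (f - g)) '' SigmaRx d x).Nonempty := by
    intro x hx
    obtain ⟨v₀, hv₀x, hv₀1⟩ := exists_unit_perp hn (hxmem x hx)
    obtain ⟨g₀, hg₀, _⟩ := construct_mem hd hf (hxmem x hx) hv₀1 hv₀x
    exact ⟨_, Set.mem_image_of_mem _ hg₀⟩
  have hbddD : BddBelow ((fun g => bwNormSys (f - g)) '' SigmaR d) := by
    refine ⟨0, fun b hb => ?_⟩
    obtain ⟨g, _, rfl⟩ := hb
    exact Real.sqrt_nonneg _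
  have hbddx : ∀ x : Fin (n + 1) → ℝ,
      BddBelow ((fun g => bwNormSys (f - g)) '' SigmaRx d x) := by
    intro x
    refine ⟨0, fun b hb => ?_⟩
    obtain ⟨g, _, rfl⟩ := hb
    exact Real.sqrt_nonneg _
  have hDne : ((fun g => bwNormSys (f - g)) '' SigmaR d).Nonempty := by
    obtain ⟨x₀, hx₀⟩ := sphere_nonempty n
    obtain ⟨b, hb⟩ := hnonemptyx x₀ hx₀
    obtain ⟨g, hg, rfl⟩ := hb
    exact ⟨_, Set.mem_image_of_mem _ (sigmaRx_subset d hx₀ hg)⟩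
  refine le_antisymm ?_ ?_
  · refine le_csInf ((sphere_nonempty n).image _) ?_
    rintro b ⟨x, hx, rfl⟩
    exact csInf_le_csInf hbddD (hnonemptyx x hx)
      (Set.image_mono (sigmaRx_subset d hx))
  · refine le_csInf hDne ?_
    rintro b ⟨g, hg, rfl⟩
    obtain ⟨x, hx, hgx⟩ := Set.mem_iUnion₂.mp hg
    calc sInf ((fun x => bwDist f (SigmaRx d x)) '' unitSphere n)
        ≤ bwDist f (SigmaRx d x) := by
          refine csInf_le ⟨0, fun b hb => ?_⟩ (Set.mem_image_of_mem _ hx)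
          obtain ⟨y, hy, rfl⟩ := hb
          exact le_csInf (hnonemptyx y hy) (fun c hc => by
            obtain ⟨g', _, rfl⟩ := hc
            exact Real.sqrt_nonneg _)
      _ ≤ bwNormSys (f - g) := csInf_le (hbddx x) (Set.mem_image_of_mem _ hgx)

end BW

namespace BW

lemma bwDist_nonneg {n : ℕ} (f : Fin n → MvPolynomial (Fin (n + 1)) ℝ)
    (S : Set (Fin n → MvPolynomial (Fin (n + 1)) ℝ)) : 0 ≤ bwDist f S := by
  refine Real.sInf_nonneg fun b hb => ?_
  obtain ⟨g, _, rfl⟩ := hb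
  exact Real.sqrt_nonneg _

end BW

theorem kappa_eq_normW_div_dist_sigmaR' {n : ℕ} (hn : 1 ≤ n) (d : Fin n → ℕ)
    (hd : ∀ i, 1 ≤ d i) (f : Fin n → MvPolynomial (Fin (n + 1)) ℝ)
    (hf : IsSystem d f) (hf0 : f ≠ 0) :
    kappa d f = ENNReal.ofReal (bwNormSys f) / ENNReal.ofReal (bwDist f (SigmaR d)) := by
  classical
  set c : ℝ≥0∞ := ENNReal.ofReal (bwNormSys f) with hc
  have h1 : kappa d f = ⨆ x : unitSphere n, c / ENNReal.ofReal (bwDist f (SigmaRx d ↑x)) := by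
    rw [kappa, iSup_subtype']
    refine iSup_congr fun x => ?_
    rw [BW.bwDist_sigmaRx hn hd hf x.2]
    rfl
  have h2 : ENNReal.ofReal (bwDist f (SigmaR d))
      = ⨅ x : unitSphere n, ENNReal.ofReal (bwDist f (SigmaRx d ↑x)) := by
    rw [BW.bwDist_sigmaR_eq hn hd hf]
    rw [Monotone.map_csInf_of_continuousAt
      (ENNReal.continuous_ofReal.continuousAt)
      (fun a b h => ENNReal.ofReal_le_ofReal h)
      ((BW.sphere_nonempty n).image _)
      ⟨0, fun b hb => by
        obtain ⟨x, _, rfl⟩ := hb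
        exact BW.bwDist_nonneg f _⟩]
    rw [← Set.image_comp]
    rw [sInf_image']
    rfl
  rw [h1, h2]
  simp_rw [div_eq_mul_inv]
  rw [ENNReal.inv_iInf, ENNReal.mul_iSup]

/-- **Condition Number Theorem.** For every nonzero `f ∈ H_d`,
`κ̃(f) = ‖f‖_W / dist(f, Σ_ℝ)`. -/
theorem kappa_eq_normW_div_dist_sigmaR {n : ℕ} (hn : 1 ≤ n) (d : Fin n → ℕ)
    (hd : ∀ i, 1 ≤ d i) (f : Fin n → MvPolynomial (Fin (n + 1)) ℝ)
    (hf : IsSystem d f) (hf0 : f ≠ 0) :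
    kappa d f = ENNReal.ofReal (bwNormSys f) / ENNReal.ofReal (bwDist f (SigmaR d)) := by
  exact kappa_eq_normW_div_dist_sigmaR' hn d hd f hf hf0
end

section
/- Let e_0 = (1,0,…,0) ∈ S^n. For every f ∈ H_d and every g ∈ H_d with g(e_0) = 0, writing Df(e_0) and Dg(e_0) for the restrictions of the derivatives at e_0 to the tangent space T_{e_0}S^n ≅ span(e_1,…,e_n), one has ‖f − g‖_W² ≥ ‖f(e_0)‖_2² + ‖diag(1/√d_1,…,1/√d_n)·Df(e_0) − diag(1/√d_1,…,1/√d_n)·Dg(e_0)‖_F², where ‖·‖_F is the Frobenius norm of n×n matrices. -/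
open MvPolynomial Finset ENNReal

noncomputable def e0 (n : ℕ) : Fin (n+1) → ℝ := fun k => if k = 0 then 1 else 0

lemma P_one {n : ℕ} (u : Fin (n+1) →₀ ℕ) (h : ∀ i, i ≠ 0 → u i = 0) :
    ∏ i ∈ u.support, e0 n i ^ u i = 1 := by
  apply Finset.prod_eq_one
  intro i hi
  rcases eq_or_ne i 0 with rfl | hne
  · simp [e0]
  · exact absurd (h i hne) (Finsupp.mem_support_iff.mp hi)

lemma P_zero {n : ℕ} (u : Fin (n+1) →₀ ℕ) (i : Fin (n+1)) (hi : u i ≠ 0) (h : i ≠ 0) :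
    ∏ j ∈ u.support, e0 n j ^ u j = 0 := by
  apply Finset.prod_eq_zero (Finsupp.mem_support_iff.mpr hi)
  simp [e0, h, zero_pow hi]

lemma supp_single {n : ℕ} (u : Fin (n+1) →₀ ℕ) (h : ∀ i, i ≠ 0 → u i = 0) :
    u = Finsupp.single 0 (u 0) := by
  ext i
  rcases eq_or_ne i 0 with rfl | hne
  · simp
  · simp [Finsupp.single_apply, Ne.symm hne, h i hne]

lemma deg_single {σ : Type*} (a : σ) (b : ℕ) : Finsupp.degree (Finsupp.single a b) = b := by
  classical
  rcases eq_or_ne b 0 with rfl | hb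
  · simp [Finsupp.degree]
  · exact Finsupp.degree_single a b

lemma deg_add {σ : Type*} (u v : σ →₀ ℕ) : Finsupp.degree (u + v) = u.degree + v.degree := by
  classical
  simp only [Finsupp.degree_eq_weight_one]
  exact map_add _ u v

lemma eval_e0 {n d : ℕ} (p : MvPolynomial (Fin (n+1)) ℝ) (hp : p.IsHomogeneous d) :
    eval (e0 n) p = coeff (Finsupp.single 0 d) p := by
  rw [eval_eq]
  rw [Finset.sum_eq_single (Finsupp.single (0 : Fin (n+1)) d)]
  · rw [P_one]
    · ring
    · intro i hi; simp [Finsupp.single_apply, Ne.symm hi]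
  · intro j hj hne
    by_cases hz : ∀ i, i ≠ (0 : Fin (n+1)) → j i = 0
    · exfalso
      apply hne
      have h1 := supp_single j hz
      have h2 : j.degree = d := by
        by_contra hc
        exact Finsupp.mem_support_iff.mp hj (hp.coeff_eq_zero hc)
      have h3 : j 0 = d := by
        rw [h1] at h2; rwa [deg_single] at h2
      rw [h1, h3]
    · push_neg at hz
      obtain ⟨i, hi0, hji⟩ := hz
      rw [P_zero j i hji hi0]
      ring
  · intro h
    rw [notMem_support_iff.mp h]
    ring

lemma eval_pderiv_e0 {n d : ℕ} (hd : 1 ≤ d) {m : Fin (n+1)} (hm : m ≠ 0)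
    (p : MvPolynomial (Fin (n+1)) ℝ) (hp : p.IsHomogeneous d) :
    eval (e0 n) (pderiv m p) =
      coeff (Finsupp.single 0 (d-1) + Finsupp.single m 1) p := by
  set j2 : Fin (n+1) →₀ ℕ := Finsupp.single 0 (d-1) + Finsupp.single m 1 with hj2
  conv_lhs => rw [p.as_sum]
  rw [map_sum, map_sum]
  rw [Finset.sum_eq_single j2]
  · rw [pderiv_monomial, eval_monomial]
    have hm2 : j2 m = 1 := by
      simp [hj2, Finsupp.single_apply, Ne.symm hm]
    have hsub : j2 - Finsupp.single m 1 = Finsupp.single 0 (d-1) := by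
      simp [hj2]
    rw [hsub, hm2]
    rw [Finsupp.prod]
    rw [P_one]
    · ring
    · intro i hi; simp [Finsupp.single_apply, Ne.symm hi]
  · intro j hj hne
    rw [pderiv_monomial, eval_monomial]
    rcases eq_or_ne (j m) 0 with hjm | hjm
    · rw [hjm]; ring
    · set u := j - Finsupp.single m 1 with hu
      have hju : j = u + Finsupp.single m 1 := by
        ext i
        rcases eq_or_ne i m with rfl | hne2
        · simp [hu, Finsupp.single_apply]
          omega
        · simp [hu, Finsupp.single_apply, Ne.symm hne2]
      by_cases hz : ∀ i, i ≠ (0 : Fin (n+1)) → u i = 0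
      · exfalso
        apply hne
        have h1 := supp_single u hz
        have h2 : j.degree = d := by
          by_contra hc
          exact Finsupp.mem_support_iff.mp hj (hp.coeff_eq_zero hc)
        have h3 : u 0 = d - 1 := by
          rw [hju, h1, deg_add, deg_single, deg_single] at h2
          omega
        rw [hju, h1, h3, hj2]
      · push_neg at hz
        obtain ⟨i, hi0, hui⟩ := hz
        rw [Finsupp.prod, P_zero u i hui hi0]
        ring
  · intro h
    rw [notMem_support_iff.mp h]
    simp


lemma M1 {n d : ℕ} :
    Nat.multinomial (Finset.univ : Finset (Fin (n+1))) ⇑(Finsupp.single (0 : Fin (n+1)) d) = 1 := by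
  rw [Nat.multinomial]
  have hs : ∑ i : Fin (n+1), (Finsupp.single (0 : Fin (n+1)) d) i = d := by
    simp [Finsupp.single_apply]
  have hp : ∏ i : Fin (n+1), Nat.factorial ((Finsupp.single (0 : Fin (n+1)) d) i)
      = Nat.factorial d := by
    have h : ∀ i : Fin (n+1), Nat.factorial ((Finsupp.single (0 : Fin (n+1)) d) i)
        = if i = 0 then Nat.factorial d else 1 := by
      intro i
      rcases eq_or_ne i 0 with rfl | h
      · simp [Finsupp.single_apply]
      · simp [Finsupp.single_apply, Ne.symm h, h]
    rw [Finset.prod_congr rfl fun i _ => h i]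
    simp
  rw [hs, hp, Nat.div_self d.factorial_pos]

lemma M2 {n d : ℕ} (hd : 1 ≤ d) {m : Fin (n+1)} (hm : m ≠ 0) :
    Nat.multinomial (Finset.univ : Finset (Fin (n+1)))
      ⇑((Finsupp.single (0 : Fin (n+1)) (d-1) + Finsupp.single m 1 : Fin (n+1) →₀ ℕ)) = d := by
  obtain ⟨e, rfl⟩ : ∃ e, d = e + 1 := ⟨d - 1, (Nat.succ_pred_eq_of_pos hd).symm⟩
  rw [Nat.multinomial]
  set u : Fin (n+1) →₀ ℕ := Finsupp.single (0 : Fin (n+1)) (e+1-1) + Finsupp.single m 1 with hu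
  have happ : ∀ i : Fin (n+1), u i = (if i = 0 then e else 0) + (if i = m then 1 else 0) := by
    intro i; simp [hu, Finsupp.single_apply, eq_comm]
  have hs : ∑ i : Fin (n+1), u i = e + 1 := by
    rw [Finset.sum_congr rfl fun i _ => happ i, Finset.sum_add_distrib]
    simp
  have hp : ∏ i : Fin (n+1), Nat.factorial (u i) = Nat.factorial e := by
    have h : ∀ i : Fin (n+1), Nat.factorial (u i) = if i = 0 then Nat.factorial e else 1 := by
      intro i
      rw [happ i]
      rcases eq_or_ne i 0 with rfl | h
      · simp [Ne.symm hm]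
      · rcases eq_or_ne i m with rfl | h2
        · simp [h]
        · simp [h, h2]
    rw [Finset.prod_congr rfl fun i _ => h i]
    simp
  rw [hs, hp, Nat.factorial_succ, Nat.mul_div_cancel _ e.factorial_pos]

lemma bwInner_self_nonneg {m : ℕ} (p : MvPolynomial (Fin m) ℝ) : 0 ≤ bwInner p p := by
  apply Finset.sum_nonneg
  intro j _
  exact div_nonneg (mul_self_nonneg _) (Nat.cast_nonneg _)

lemma core_ineq {n dd : ℕ} (hdd : 1 ≤ dd) (p : MvPolynomial (Fin (n+1)) ℝ)
    (hp : p.IsHomogeneous dd) :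
    (eval (e0 n) p) ^ 2 + ∑ k : Fin n, (eval (e0 n) (pderiv k.succ p) / Real.sqrt dd) ^ 2
      ≤ bwInner p p := by
  classical
  set t : (Fin (n+1) →₀ ℕ) → ℝ :=
    fun j => coeff j p * coeff j p / (Nat.multinomial Finset.univ ⇑j : ℝ) with ht
  have hnn : ∀ j, 0 ≤ t j := fun j => div_nonneg (mul_self_nonneg _) (Nat.cast_nonneg _)
  set T : Finset (Fin (n+1) →₀ ℕ) :=
    insert (Finsupp.single 0 dd)
      ((Finset.univ : Finset (Fin n)).image
        (fun k => Finsupp.single 0 (dd-1) + Finsupp.single k.succ 1)) with hT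
  have hbw : bwInner p p = ∑ j ∈ p.support, t j := by
    rw [bwInner, Finset.union_self]
  have key : ∑ j ∈ T, t j ≤ bwInner p p := by
    rw [hbw]
    have h1 : ∑ j ∈ T ∩ p.support, t j = ∑ j ∈ T, t j := by
      apply Finset.sum_subset Finset.inter_subset_left
      intro j hj hj2
      have : j ∉ p.support := fun hs => hj2 (Finset.mem_inter.mpr ⟨hj, hs⟩)
      rw [ht]
      simp [notMem_support_iff.mp this]
    rw [← h1]
    exact Finset.sum_le_sum_of_subset_of_nonneg Finset.inter_subset_right
      (fun j _ _ => hnn j)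
  refine le_trans (le_of_eq ?_) key
  have hnotmem : Finsupp.single (0 : Fin (n+1)) dd ∉
      (Finset.univ : Finset (Fin n)).image
        (fun k => Finsupp.single (0 : Fin (n+1)) (dd-1) + Finsupp.single k.succ 1) := by
    intro hmem
    obtain ⟨k, -, hk⟩ := Finset.mem_image.mp hmem
    have := DFunLike.congr_fun hk k.succ
    simp [Finsupp.single_apply, Ne.symm (Fin.succ_ne_zero k)] at this
  rw [hT, Finset.sum_insert hnotmem]
  have hinj : ∀ a ∈ (Finset.univ : Finset (Fin n)), ∀ b ∈ Finset.univ,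
      (Finsupp.single (0 : Fin (n+1)) (dd-1) + Finsupp.single a.succ 1 =
        Finsupp.single 0 (dd-1) + Finsupp.single b.succ 1) → a = b := by
    intro a _ b _ hab
    have := DFunLike.congr_fun hab a.succ
    simp [Finsupp.single_apply, Ne.symm (Fin.succ_ne_zero a),
      Ne.symm (Fin.succ_ne_zero b)] at this
    rcases eq_or_ne b a with h | h
    · exact h.symm
    · simp [h] at this
  rw [Finset.sum_image hinj]
  congr 1
  · simp only [ht]
    rw [M1, eval_e0 p hp]
    rw [Nat.cast_one, div_one, sq]
  · apply Finset.sum_congr rfl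
    intro k _
    simp only [ht]
    rw [M2 hdd (Fin.succ_ne_zero k), eval_pderiv_e0 hdd (Fin.succ_ne_zero k) p hp]
    rw [div_pow, Real.sq_sqrt (Nat.cast_nonneg dd), sq]

/-- For `e₀ = (1,0,…,0)` and `f, g ∈ H_d` with `g(e₀) = 0`,
`‖f - g‖_W² ≥ ‖f(e₀)‖₂² + ‖diag(1/√dᵢ)·Df(e₀) - diag(1/√dᵢ)·Dg(e₀)‖_F²`, where the
restricted derivatives at `e₀` are the Jacobians in the tangent directions
`e₁, …, eₙ` and `‖·‖_F` is the Frobenius norm of `n × n` matrices. -/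
theorem sq_dist_ge_eval_add_frobenius {n : ℕ} (hn : 1 ≤ n) (d : Fin n → ℕ)
    (hd : ∀ i, 1 ≤ d i) (f g : Fin n → MvPolynomial (Fin (n + 1)) ℝ)
    (hf : IsSystem d f) (hg : IsSystem d g)
    (hge : ∀ i, MvPolynomial.eval (fun k => if k = 0 then (1 : ℝ) else 0) (g i) = 0) :
    (∑ i, (MvPolynomial.eval (fun k => if k = 0 then (1 : ℝ) else 0) (f i)) ^ 2) +
      ∑ i, ∑ k : Fin n,
        ((MvPolynomial.eval (fun k => if k = 0 then (1 : ℝ) else 0)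
            (MvPolynomial.pderiv k.succ (f i)) -
          MvPolynomial.eval (fun k => if k = 0 then (1 : ℝ) else 0)
            (MvPolynomial.pderiv k.succ (g i))) / Real.sqrt (d i)) ^ 2
      ≤ bwNormSys (f - g) ^ 2 :=  by
  classical
  have hx : (fun k => if k = (0 : Fin (n+1)) then (1:ℝ) else 0) = e0 n := rfl
  have hnn : 0 ≤ ∑ i, bwInner ((f - g) i) ((f - g) i) :=
    Finset.sum_nonneg fun i _ => bwInner_self_nonneg _
  rw [bwNormSys, Real.sq_sqrt hnn]
  rw [← Finset.sum_add_distrib]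
  apply Finset.sum_le_sum
  intro i _
  have hsub : (f - g) i = f i - g i := rfl
  have hhom : ((f - g) i).IsHomogeneous (d i) := by
    rw [hsub]; exact (hf i).sub (hg i)
  have h1 : eval (e0 n) ((f - g) i) =
      eval (fun k => if k = (0 : Fin (n+1)) then (1:ℝ) else 0) (f i) := by
    rw [hsub, map_sub, ← hx, hge i, sub_zero]
  have h2 : ∀ k : Fin n, eval (e0 n) (pderiv k.succ ((f - g) i)) =
      eval (fun k => if k = (0 : Fin (n+1)) then (1:ℝ) else 0) (pderiv k.succ (f i)) -
      eval (fun k => if k = (0 : Fin (n+1)) then (1:ℝ) else 0) (pderiv k.succ (g i)) := by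
    intro k
    rw [hsub, map_sub, map_sub, hx]
  calc _ = (eval (e0 n) ((f - g) i)) ^ 2 +
        ∑ k : Fin n, (eval (e0 n) (pderiv k.succ ((f - g) i)) / Real.sqrt (d i)) ^ 2 := by
        rw [h1]
        congr 1
        exact Finset.sum_congr rfl fun k _ => by rw [h2 k]
    _ ≤ _ := core_ineq (hd i) _ hhom
end
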